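/- Under the stated assumptions (case Φ = 3π/2), the function v̂₁(w) := m(w) + Q(w) − Ĝ(w), where Ĝ(w) = iω·sinh(w − 3πi/2)/(iω·sinh w + k), has a simple pole at −p₁ + πi with residue −2i; precisely, (w − (−p₁ + πi))·(m(w) + Q(w) − Ĝ(w)) tends to −2i as w → −p₁ + πi (w ≠ −p₁ + πi). -/

import Mathlib

open Complex Filter Topology

/-- The complex hyperbolic cotangent. -/
noncomputable def Complex.coth (z : ℂ) : ℂ := Complex.cosh z / Complex.sinh z

private lemma key_tendsto {f g : ℂ → ℂ} {a fa g' : ℂ}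
    (hf : Tendsto f (𝓝[≠] a) (𝓝 fa))
    (hg : HasDerivAt g g' a) (hg0 : g a = 0) (hg' : g' ≠ 0) :
    Tendsto (fun w => (w - a) * (f w / g w)) (𝓝[≠] a) (𝓝 (fa / g')) := by
  have hs : Tendsto (slope g a) (𝓝[≠] a) (𝓝 g') :=
    hasDerivAt_iff_tendsto_slope.mp hg
  refine (hf.div hs hg').congr fun w => ?_
  simp only [Pi.div_apply]
  rw [slope_def_field, hg0, sub_zero, div_div_eq_mul_div]
  ring

private lemma aux_sinh_ne {z : ℂ} (h : ∀ n : ℤ, z ≠ (n : ℂ) * Real.pi * I) :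
    Complex.sinh z ≠ 0 := by
  intro h0
  have h1 : Complex.sin (z * I) = 0 := by rw [Complex.sin_mul_I, h0, zero_mul]
  obtain ⟨n, hn⟩ := Complex.sin_eq_zero_iff.mp h1
  apply h (-n)
  have h2 : z * I * -I = ((n : ℂ) * Real.pi) * -I := by rw [hn]
  have h3 : z = ((n : ℂ) * Real.pi) * -I := by
    rw [← h2]; simp [mul_assoc, Complex.I_mul_I]
  rw [h3]; push_cast; ring

private lemma aux_sinh_ne_re {z : ℂ} (h : z.re ≠ 0) : Complex.sinh z ≠ 0 := by
  apply aux_sinh_ne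
  intro n hn
  apply h
  rw [hn]
  simp [Complex.mul_re, Complex.mul_im]

theorem residue_of_v1_at_minus_p1_plus_pi_i
    (ω : ℂ) (hω : 0 < ω.im) (k : ℝ) (hk : 0 < k)
    (G : ℂ → ℂ)
    (hG : ∀ w : ℂ, G w = (I * ω * Complex.sinh (w - 3 * Real.pi * I / 2)) /
      (I * ω * Complex.sinh w + k))
    (G₂ m : ℂ → ℂ)
    (hG₂ : ∀ w : ℂ, G₂ w = I * ω ^ 2 * Complex.sinh (2 * w) /
      (ω ^ 2 * (Complex.sinh w) ^ 2 + (k : ℂ) ^ 2))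
    (hm : ∀ w : ℂ, m w = ((Real.pi + 2 * I * w) / (6 * Real.pi)) * G₂ w)
    (p₁ : ℂ) (hp : Complex.sinh p₁ = I * k / ω) (hc : Complex.cosh p₁ ≠ 0)
    (hre : p₁.re ≠ 0)
    (m₁ m₂ m₃ : ℂ)
    (hm₁ : m₁ = -p₁ / (3 * Real.pi) + I / 6)
    (hm₂ : m₂ = -p₁ / (3 * Real.pi) - I / 6)
    (hm₃ : m₃ = -p₁ / (3 * Real.pi) + I / 2)
    (Q : ℂ → ℂ)
    (hQ : ∀ w : ℂ, Q w =
      ((I - m₁) / 3) * Complex.coth ((w - p₁) / 3)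
      - (m₂ / 3) * Complex.coth ((w - p₁ - Real.pi * I) / 3)
      - (m₃ / 3) * Complex.coth ((w - p₁ + Real.pi * I) / 3)
      - ((I - m₁) / 3) * Complex.coth ((w + p₁ - Real.pi * I) / 3)
      + (m₂ / 3) * Complex.coth ((w + p₁) / 3)
      + (m₃ / 3) * Complex.coth ((w + p₁ + Real.pi * I) / 3)) :
    Tendsto (fun w => (w - (-p₁ + Real.pi * I)) * (m w + Q w - G w))
      (𝓝[≠] (-p₁ + Real.pi * I)) (𝓝 (-2 * I)) := by
  have hπ : (Real.pi : ℝ) ≠ 0 := Real.pi_ne_zero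
  have hπC : (Real.pi : ℂ) ≠ 0 := by exact_mod_cast hπ
  have hωne : ω ≠ 0 := by intro h; rw [h] at hω; simp at hω
  have hkC : (k : ℂ) ≠ 0 := by exact_mod_cast hk.ne'
  set a : ℂ := -p₁ + Real.pi * I with ha
  -- special values of sinh/cosh
  have hsinh_pi : Complex.sinh ((Real.pi : ℂ) * I) = 0 := by
    rw [Complex.sinh_mul_I, ← Complex.ofReal_sin, Real.sin_pi]; simp
  have hcosh_pi : Complex.cosh ((Real.pi : ℂ) * I) = -1 := by
    rw [Complex.cosh_mul_I, ← Complex.ofReal_cos, Real.cos_pi]; simp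
  have hsa : Complex.sinh a = Complex.sinh p₁ := by
    rw [ha, Complex.sinh_add, hsinh_pi, hcosh_pi, Complex.sinh_neg]; ring
  have hca : Complex.cosh a = -Complex.cosh p₁ := by
    rw [ha, Complex.cosh_add, hsinh_pi, hcosh_pi, Complex.cosh_neg]; ring
  have hsane : Complex.sinh a ≠ 0 := by
    rw [hsa, hp]; exact div_ne_zero (mul_ne_zero I_ne_zero hkC) hωne
  have hcane : Complex.cosh a ≠ 0 := by rw [hca]; exact neg_ne_zero.mpr hc
  have hpi2 : (Real.pi : ℂ) * I / 2 = ((Real.pi / 2 : ℝ) : ℂ) * I := by push_cast; ring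
  have hcosh_pi2 : Complex.cosh ((Real.pi : ℂ) * I / 2) = 0 := by
    rw [hpi2, Complex.cosh_mul_I, ← Complex.ofReal_cos, Real.cos_pi_div_two]; simp
  have hsinh_pi2 : Complex.sinh ((Real.pi : ℂ) * I / 2) = I := by
    rw [hpi2, Complex.sinh_mul_I, ← Complex.ofReal_sin, Real.sin_pi_div_two]; simp
  have hsG : Complex.sinh (a - 3 * Real.pi * I / 2) = -I * Complex.cosh p₁ := by
    have h1 : a - 3 * (Real.pi : ℂ) * I / 2 = -(p₁ + (Real.pi : ℂ) * I / 2) := by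
      rw [ha]; ring
    rw [h1, Complex.sinh_neg, Complex.sinh_add, hcosh_pi2, hsinh_pi2]; ring
  -- convenient continuity-to-tendsto helper
  have tendsCA : ∀ {h : ℂ → ℂ}, ContinuousAt h a → Tendsto h (𝓝[≠] a) (𝓝 (h a)) :=
    fun hh => hh.tendsto.mono_left nhdsWithin_le_nhds
  -- the m part
  have hDa : ω ^ 2 * (Complex.sinh a) ^ 2 + (k : ℂ) ^ 2 = 0 := by
    rw [hsa, hp]
    field_simp
    linear_combination (k:ℂ)^2 * Complex.I_sq
  have hD : HasDerivAt (fun w => ω ^ 2 * (Complex.sinh w) ^ 2 + (k : ℂ) ^ 2)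
      (ω ^ 2 * (2 * Complex.sinh a * Complex.cosh a)) a := by
    have h0 := (((Complex.hasDerivAt_sinh a).fun_pow 2).const_mul (ω ^ 2)).add_const ((k : ℂ) ^ 2)
    refine h0.congr_deriv ?_
    push_cast
    ring
  have hD'ne : ω ^ 2 * (2 * Complex.sinh a * Complex.cosh a) ≠ 0 :=
    mul_ne_zero (pow_ne_zero _ hωne)
      (mul_ne_zero (mul_ne_zero two_ne_zero hsane) hcane)
  have hNt : Tendsto (fun w => I * ω ^ 2 * Complex.sinh (2 * w)) (𝓝[≠] a)
      (𝓝 (I * ω ^ 2 * Complex.sinh (2 * a))) := tendsCA (by fun_prop)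
  have Tm : Tendsto (fun w => (w - a) * m w) (𝓝[≠] a)
      (𝓝 ((((Real.pi : ℂ) + 2 * I * a) / (6 * Real.pi)) *
        (I * ω ^ 2 * Complex.sinh (2 * a) / (ω ^ 2 * (2 * Complex.sinh a * Complex.cosh a))))) := by
    have h1 := key_tendsto hNt hD hDa hD'ne
    have h2 : Tendsto (fun w : ℂ => ((Real.pi : ℂ) + 2 * I * w) / (6 * Real.pi)) (𝓝[≠] a)
        (𝓝 (((Real.pi : ℂ) + 2 * I * a) / (6 * Real.pi))) := tendsCA (by fun_prop)
    refine (h2.mul h1).congr fun w => ?_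
    rw [hm w, hG₂ w]
    push_cast
    ring
  -- the G part
  have hGa : I * ω * Complex.sinh a + (k : ℂ) = 0 := by
    rw [hsa, hp]
    field_simp
    linear_combination (k:ℂ) * Complex.I_sq
  have hGd : HasDerivAt (fun w => I * ω * Complex.sinh w + (k : ℂ))
      (I * ω * Complex.cosh a) a :=
    ((Complex.hasDerivAt_sinh a).const_mul (I * ω)).add_const _
  have hGdne : I * ω * Complex.cosh a ≠ 0 :=
    mul_ne_zero (mul_ne_zero I_ne_zero hωne) hcane
  have hGnt : Tendsto (fun w => I * ω * Complex.sinh (w - 3 * Real.pi * I / 2)) (𝓝[≠] a)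
      (𝓝 (I * ω * Complex.sinh (a - 3 * Real.pi * I / 2))) := tendsCA (by fun_prop)
  have TG : Tendsto (fun w => (w - a) * G w) (𝓝[≠] a)
      (𝓝 ((I * ω * Complex.sinh (a - 3 * Real.pi * I / 2)) / (I * ω * Complex.cosh a))) := by
    refine (key_tendsto hGnt hGd hGa hGdne).congr fun w => ?_
    rw [hG w]
  -- the Q part: five regular coth terms
  have zeroterm : ∀ l : ℂ → ℂ, Continuous l → Complex.sinh (l a) ≠ 0 →
      Tendsto (fun w => (w - a) * Complex.coth (l w)) (𝓝[≠] a) (𝓝 0) := by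
    intro l hl hne
    have h0 : Tendsto (fun w : ℂ => w - a) (𝓝[≠] a) (𝓝 0) := by
      have := tendsCA (h := fun w : ℂ => w - a) (by fun_prop)
      simpa using this
    have hcoth : Tendsto (fun w => Complex.coth (l w)) (𝓝[≠] a) (𝓝 (Complex.coth (l a))) := by
      apply tendsCA
      exact ((Complex.continuous_cosh.comp hl).continuousAt).div
        ((Complex.continuous_sinh.comp hl).continuousAt) hne
    simpa using h0.mul hcoth
  have hz1 : Complex.sinh ((a - p₁) / 3) ≠ 0 := by
    apply aux_sinh_ne_re
    rw [ha]
    simp [Complex.div_re, Complex.add_re, Complex.sub_re, Complex.normSq]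
    intro h
    exact hre (by linarith)
  have hz2 : Complex.sinh ((a - p₁ - Real.pi * I) / 3) ≠ 0 := by
    apply aux_sinh_ne_re
    rw [ha]
    simp [Complex.div_re, Complex.add_re, Complex.sub_re, Complex.normSq]
    intro h
    exact hre (by linarith)
  have hz3 : Complex.sinh ((a - p₁ + Real.pi * I) / 3) ≠ 0 := by
    apply aux_sinh_ne_re
    rw [ha]
    simp [Complex.div_re, Complex.add_re, Complex.sub_re, Complex.normSq]
    intro h
    exact hre (by linarith)
  have hz5 : Complex.sinh ((a + p₁) / 3) ≠ 0 := by
    have e5 : (a + p₁) / 3 = (Real.pi : ℂ) * I / 3 := by rw [ha]; ring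
    rw [e5]
    apply aux_sinh_ne
    intro n hn
    have h := congrArg Complex.im hn
    simp [Complex.div_im, Complex.mul_im, Complex.mul_re] at h
    have h3 : (3 : ℝ) * n = 1 := by
      field_simp at h
      nlinarith [Real.pi_pos, h]
    have h4 : (3 * n : ℤ) = 1 := by exact_mod_cast h3
    omega
  have hz6 : Complex.sinh ((a + p₁ + Real.pi * I) / 3) ≠ 0 := by
    have e6 : (a + p₁ + Real.pi * I) / 3 = 2 * (Real.pi : ℂ) * I / 3 := by rw [ha]; ring
    rw [e6]
    apply aux_sinh_ne
    intro n hn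
    have h := congrArg Complex.im hn
    simp [Complex.div_im, Complex.mul_im, Complex.mul_re] at h
    have h3 : (3 : ℝ) * n = 2 := by
      field_simp at h
      nlinarith [Real.pi_pos, h]
    have h4 : (3 * n : ℤ) = 2 := by exact_mod_cast h3
    omega
  -- the singular coth term
  have e4 : a + p₁ - (Real.pi : ℂ) * I = 0 := by rw [ha]; ring
  have hl4 : HasDerivAt (fun w : ℂ => (w + p₁ - (Real.pi : ℂ) * I) / 3) (1 / 3) a := by
    have := (((hasDerivAt_id a).add_const p₁).sub_const ((Real.pi : ℂ) * I)).div_const 3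
    simpa using this
  have hg4 : HasDerivAt (fun w => Complex.sinh ((w + p₁ - (Real.pi : ℂ) * I) / 3))
      (Complex.cosh ((a + p₁ - (Real.pi : ℂ) * I) / 3) * (1 / 3)) a :=
    HasDerivAt.comp a (Complex.hasDerivAt_sinh _) hl4
  have t4 : Tendsto (fun w => (w - a) * Complex.coth ((w + p₁ - Real.pi * I) / 3)) (𝓝[≠] a)
      (𝓝 3) := by
    have hf4 : Tendsto (fun w => Complex.cosh ((w + p₁ - (Real.pi : ℂ) * I) / 3)) (𝓝[≠] a)
        (𝓝 (Complex.cosh ((a + p₁ - (Real.pi : ℂ) * I) / 3))) := tendsCA (by fun_prop)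
    have hg40 : Complex.sinh ((a + p₁ - (Real.pi : ℂ) * I) / 3) = 0 := by rw [e4]; simp
    have hg4ne : Complex.cosh ((a + p₁ - (Real.pi : ℂ) * I) / 3) * (1 / 3) ≠ 0 := by
      rw [e4]; norm_num
    have h := key_tendsto hf4 hg4 hg40 hg4ne
    have hv : Complex.cosh ((a + p₁ - (Real.pi : ℂ) * I) / 3) /
        (Complex.cosh ((a + p₁ - (Real.pi : ℂ) * I) / 3) * (1 / 3)) = 3 := by
      rw [e4]; norm_num
    rw [hv] at h
    refine h.congr fun w => ?_
    rw [Complex.coth]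
  -- assemble Q
  have t1 := zeroterm (fun w => (w - p₁) / 3) (by fun_prop) hz1
  have t2 := zeroterm (fun w => (w - p₁ - Real.pi * I) / 3) (by fun_prop) hz2
  have t3 := zeroterm (fun w => (w - p₁ + Real.pi * I) / 3) (by fun_prop) hz3
  have t5 := zeroterm (fun w => (w + p₁) / 3) (by fun_prop) hz5
  have t6 := zeroterm (fun w => (w + p₁ + Real.pi * I) / 3) (by fun_prop) hz6
  have TQ : Tendsto (fun w => (w - a) * Q w) (𝓝[≠] a)
      (𝓝 (((I - m₁) / 3) * 0 - (m₂ / 3) * 0 - (m₃ / 3) * 0 - ((I - m₁) / 3) * 3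
        + (m₂ / 3) * 0 + (m₃ / 3) * 0)) := by
    have h := (((((t1.const_mul ((I - m₁) / 3)).sub (t2.const_mul (m₂ / 3))).sub
      (t3.const_mul (m₃ / 3))).sub (t4.const_mul ((I - m₁) / 3))).add
      (t5.const_mul (m₂ / 3))).add (t6.const_mul (m₃ / 3))
    refine h.congr fun w => ?_
    rw [hQ w]
    ring
  -- assemble everything
  have Tall := (Tm.add TQ).sub TG
  have hval : ((Real.pi : ℂ) + 2 * I * a) / (6 * Real.pi) *
      (I * ω ^ 2 * Complex.sinh (2 * a) / (ω ^ 2 * (2 * Complex.sinh a * Complex.cosh a))) +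
      ((I - m₁) / 3 * 0 - m₂ / 3 * 0 - m₃ / 3 * 0 - (I - m₁) / 3 * 3
        + m₂ / 3 * 0 + m₃ / 3 * 0) -
      I * ω * Complex.sinh (a - 3 * Real.pi * I / 2) / (I * ω * Complex.cosh a)
      = -2 * I := by
    rw [Complex.sinh_two_mul, hsG, hca, hsa, hp, hm₁, ha]
    have hXne : ω ^ 2 * (2 * (I * (k : ℂ) / ω) * (-Complex.cosh p₁)) ≠ 0 := by
      have he : ω ^ 2 * (2 * (I * (k : ℂ) / ω) * (-Complex.cosh p₁))
          = -2 * (I * ((k : ℂ) * (ω * Complex.cosh p₁))) := by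
        field_simp
      rw [he]
      simp [hωne, hkC, hc, Complex.I_ne_zero]
    have h1 : I * ω ^ 2 * (2 * (I * (k : ℂ) / ω) * (-Complex.cosh p₁)) /
        (ω ^ 2 * (2 * (I * (k : ℂ) / ω) * (-Complex.cosh p₁))) = I := by
      rw [div_eq_iff hXne]; ring
    have h3 : I * ω * (-I * Complex.cosh p₁) / (I * ω * (-Complex.cosh p₁)) = I := by
      have hd : I * ω * (-Complex.cosh p₁) ≠ 0 :=
        mul_ne_zero (mul_ne_zero I_ne_zero hωne) (neg_ne_zero.mpr hc)
      rw [div_eq_iff hd]; ring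
    have h4 : ((Real.pi : ℂ) + 2 * I * (-p₁ + Real.pi * I)) / (6 * Real.pi) * I
        = p₁ / (3 * Real.pi) - I / 6 := by
      field_simp
      linear_combination (6 * (Real.pi : ℂ) * I - 6 * p₁) * Complex.I_sq
    rw [h1, h3, h4]
    ring
  rw [hval] at Tall
  exact Tall.congr fun w => by ring
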